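/- Let L be a finite Galois extension of ℚ with Galois group G, and let H ≤ G be a subgroup such that G acts faithfully on G/H. If the cardinality of G/H is a prime number, then the pair (G,H) is ℚ-trivial. -/

import Mathlib

noncomputable section

open Polynomial

/-- `z` is a root of rational: some positive power of `z` is rational. -/
def IsRootOfRational (z : ℂ) : Prop := ∃ k : ℕ, 0 < k ∧ ∃ q : ℚ, z ^ k = (q : ℂ)

/-- `z` is a rational number (viewed in `ℂ`). -/
def IsRat (z : ℂ) : Prop := ∃ q : ℚ, z = (q : ℂ)

/-- The Galois-like group `G_f`: permutations of the (indexed) roots preserving all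
multiplicative relations. -/
def GaloisLike {ι : Type*} [Fintype ι] (r : ι → ℂ) : Set (Equiv.Perm ι) :=
  {σ | ∀ v : ι → ℤ, (∏ i, r i ^ v i) = 1 → (∏ i, r (σ i) ^ v i) = 1}

/-- The Galois-like group `G_f^B`. -/
def GaloisLikeB {ι : Type*} [Fintype ι] (r : ι → ℂ) : Set (Equiv.Perm ι) :=
  {σ | ∀ v : ι → ℤ, IsRat (∏ i, r i ^ v i) → (∏ i, r (σ i) ^ v i) = ∏ i, r i ^ v i}

/-- The Galois-like group `G_f^ℚ`. -/
def GaloisLikeQ {ι : Type*} [Fintype ι] (r : ι → ℂ) : Set (Equiv.Perm ι) :=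
  {σ | ∀ v : ι → ℤ, IsRat (∏ i, r i ^ v i) → IsRat (∏ i, r (σ i) ^ v i)}

/-- The exponent lattice of the vector `w` is trivial. -/
def VecLatticeTrivial {ι : Type*} [Fintype ι] (w : ι → ℂ) : Prop :=
  ∀ u : ι → ℤ, (∏ i, w i ^ u i) = 1 → ∀ i j : ι, u i = u j

/-- The lattice `R_w^ℚ` of the vector `w` is trivial. -/
def VecLatticeQTrivial {ι : Type*} [Fintype ι] (w : ι → ℂ) : Prop :=
  ∀ u : ι → ℤ, IsRat (∏ i, w i ^ u i) → ∀ i j : ι, u i = u j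

/-- A subset `M ⊆ ℚ[G/H]` is ℚ-admissible: there is `μ ∈ ℚ[G]` with stabilizer
(under left multiplication) exactly `H` such that `mμ = 0` for all `m ∈ M`
(here `Σ_{g∈G} m(ḡ) • gμ = |H| ⋅ (mμ)`, so we express `mμ = 0` this way). -/
def IsQAdmissible {G : Type*} [Group G] (H : Subgroup G) (M : Set ((G ⧸ H) →₀ ℚ)) : Prop :=
  ∃ μ : MonoidAlgebra ℚ G,
    (∀ g : G, MonoidAlgebra.single g (1 : ℚ) * μ = μ ↔ g ∈ H) ∧
    ∀ m ∈ M, (∑ᶠ g : G, m (QuotientGroup.mk g) • (MonoidAlgebra.single g (1 : ℚ) * μ)) = 0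

/-- A ℚ-subspace of `ℚ[G/H]` is a `ℚ[G]`-submodule iff it is stable under the
permutation action of `G` on `G/H`. -/
def IsGStable {G : Type*} [Group G] (H : Subgroup G) (M : Submodule ℚ ((G ⧸ H) →₀ ℚ)) : Prop :=
  ∀ g : G, ∀ m ∈ M, Finsupp.mapDomain (fun x : G ⧸ H => g • x) m ∈ M

/-- The pair `(G,H)` is ℚ-trivial: the only ℚ-admissible `ℚ[G]`-submodules of `ℚ[G/H]`
are `0` and `V₁` (the line of constant coefficient vectors). -/
def QTrivialPair {G : Type*} [Group G] (H : Subgroup G) : Prop :=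
  ∀ M : Submodule ℚ ((G ⧸ H) →₀ ℚ), IsGStable H M →
    IsQAdmissible H (M : Set ((G ⧸ H) →₀ ℚ)) →
    M = ⊥ ∨ (M : Set ((G ⧸ H) →₀ ℚ)) = {m | ∃ a : ℚ, ∀ x, m x = a}

/-- The action of `G` on `G/H` is transitive. -/
def PairTransitive {G : Type*} [Group G] (H : Subgroup G) : Prop :=
  ∀ x y : G ⧸ H, ∃ g : G, g • x = y

/-- The action of `G` on `G/H` is doubly transitive. -/
def PairDoublyTransitive {G : Type*} [Group G] (H : Subgroup G) : Prop :=
  ∀ x₁ x₂ y₁ y₂ : G ⧸ H, x₁ ≠ x₂ → y₁ ≠ y₂ → ∃ g : G, g • x₁ = y₁ ∧ g • x₂ = y₂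

/-- The action of `G` on `G/H` is doubly homogeneous. -/
def PairDoublyHomogeneous {G : Type*} [Group G] (H : Subgroup G) : Prop :=
  ∀ x₁ x₂ y₁ y₂ : G ⧸ H, x₁ ≠ x₂ → y₁ ≠ y₂ →
    ∃ g : G, ({g • x₁, g • x₂} : Set (G ⧸ H)) = {y₁, y₂}

/-- A set of permutations of `ι` acts transitively. -/
def SetTransitive {ι : Type*} (S : Set (Equiv.Perm ι)) : Prop :=
  ∀ i j : ι, ∃ σ ∈ S, σ i = j

/-- A set of permutations of `ι` acts doubly transitively. -/
def SetDoublyTransitive {ι : Type*} (S : Set (Equiv.Perm ι)) : Prop :=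
  ∀ i j k l : ι, i ≠ j → k ≠ l → ∃ σ ∈ S, σ i = k ∧ σ j = l

/-- A set of permutations of `ι` acts doubly homogeneously. -/
def SetDoublyHomogeneous {ι : Type*} (S : Set (Equiv.Perm ι)) : Prop :=
  ∀ i j k l : ι, i ≠ j → k ≠ l → ∃ σ ∈ S, ({σ i, σ j} : Set ι) = {k, l}



section Statement3Aux

open Polynomial

private noncomputable def augMap (X : Type*) : (X →₀ ℚ) →ₗ[ℚ] ℚ :=
  Finsupp.lsum ℚ fun _ => LinearMap.id

private lemma augMap_apply {X : Type*} (w : X →₀ ℚ) : augMap X w = w.sum fun _ c => c := rfl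

private lemma augMap_single {X : Type*} (x : X) (c : ℚ) : augMap X (Finsupp.single x c) = c := by
  rw [augMap_apply, Finsupp.sum_single_index]; rfl

private lemma augMap_mapDomain {X Y : Type*} (f : X → Y) (w : X →₀ ℚ) :
    augMap Y (Finsupp.mapDomain f w) = augMap X w := by
  rw [augMap_apply, augMap_apply, Finsupp.sum_mapDomain_index (fun _ => rfl) (fun _ _ _ => rfl)]

private lemma augMap_eq_sum {X : Type*} [Fintype X] (w : X →₀ ℚ) : augMap X w = ∑ x, w x := by
  rw [augMap_apply]; exact Finsupp.sum_fintype _ _ (fun _ => rfl)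

variable {G : Type*} [Group G] {H : Subgroup G}

private lemma coset_sum [Fintype G] [DecidableEq (G ⧸ H)] (μ : MonoidAlgebra ℚ G)
    (hμ : ∀ h : G, h ∈ H → MonoidAlgebra.single h (1:ℚ) * μ = μ) (a : G) :
    ∑ g' : G, (if (QuotientGroup.mk a : G ⧸ H) = QuotientGroup.mk g'
        then MonoidAlgebra.single g' (1:ℚ) * μ else 0)
      = (Nat.card H : ℚ) • (MonoidAlgebra.single a (1:ℚ) * μ) := by
  classical
  have key : ∀ g' : G, (QuotientGroup.mk a : G ⧸ H) = QuotientGroup.mk g' →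
      MonoidAlgebra.single g' (1:ℚ) * μ = MonoidAlgebra.single a (1:ℚ) * μ := by
    intro g' h
    have hmem : a⁻¹ * g' ∈ H := QuotientGroup.eq.mp h
    have h1 : MonoidAlgebra.single g' (1:ℚ)
        = MonoidAlgebra.single a (1:ℚ) * MonoidAlgebra.single (a⁻¹ * g') (1:ℚ) := by
      rw [MonoidAlgebra.single_mul_single, one_mul, mul_inv_cancel_left]
    rw [h1, mul_assoc, hμ _ hmem]
  have h2 : ∀ g' : G, (if (QuotientGroup.mk a : G ⧸ H) = QuotientGroup.mk g'
        then MonoidAlgebra.single g' (1:ℚ) * μ else 0)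
      = (if (QuotientGroup.mk a : G ⧸ H) = QuotientGroup.mk g'
        then MonoidAlgebra.single a (1:ℚ) * μ else 0) := by
    intro g'; split_ifs with h
    · rw [key g' h]
    · rfl
  rw [Finset.sum_congr rfl (fun g' _ => h2 g'), ← Finset.sum_filter, Finset.sum_const]
  have hcard : (Finset.univ.filter
      (fun g' : G => (QuotientGroup.mk a : G ⧸ H) = QuotientGroup.mk g')).card
      = Nat.card H := by
    rw [Nat.card_eq_fintype_card, ← Finset.card_univ]
    refine Finset.card_bij' (fun g' hg' => (⟨a⁻¹ * g', ?_⟩ : H)) (fun h _ => a * (h : G))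
      (fun _ _ => Finset.mem_univ _) ?_ ?_ ?_
    · exact QuotientGroup.eq.mp (Finset.mem_filter.mp hg').2
    · intro h _
      simp only [Finset.mem_filter, Finset.mem_univ, true_and]
      exact QuotientGroup.eq.mpr (by simp [h.2])
    · intro g' hg'; simp
    · intro h hh; simp
  rw [hcard, Nat.cast_smul_eq_nsmul]

private lemma not_contains_diffs [Fintype G] (hlt : 1 < Nat.card (G ⧸ H))
    (M : Set ((G ⧸ H) →₀ ℚ)) (hadm : IsQAdmissible H M)
    (hdiff : ∀ g : G, (Finsupp.single (QuotientGroup.mk g : G ⧸ H) (1:ℚ)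
      - Finsupp.single (QuotientGroup.mk 1) 1) ∈ M) : False := by
  classical
  obtain ⟨μ, hstab, hkill⟩ := hadm
  have hμH : ∀ h : G, h ∈ H → MonoidAlgebra.single h (1:ℚ) * μ = μ :=
    fun h hh => (hstab h).mpr hh
  have hcard0 : (Nat.card H : ℚ) ≠ 0 := by
    exact_mod_cast Nat.card_pos (α := H) |>.ne'
  have hall : ∀ g : G, g ∈ H := by
    intro g
    have h0 := hkill _ (hdiff g)
    rw [finsum_eq_sum_of_fintype] at h0
    have hterm : ∀ g' : G,
        ((Finsupp.single (QuotientGroup.mk g : G ⧸ H) (1:ℚ)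
          - Finsupp.single (QuotientGroup.mk 1) 1 : (G ⧸ H) →₀ ℚ) (QuotientGroup.mk g'))
          • (MonoidAlgebra.single g' (1:ℚ) * μ)
        = (if (QuotientGroup.mk g : G ⧸ H) = QuotientGroup.mk g'
            then MonoidAlgebra.single g' (1:ℚ) * μ else 0)
          - (if (QuotientGroup.mk (1:G) : G ⧸ H) = QuotientGroup.mk g'
            then MonoidAlgebra.single g' (1:ℚ) * μ else 0) := by
      intro g'
      rw [Finsupp.sub_apply, Finsupp.single_apply, Finsupp.single_apply, sub_smul,
        ite_smul, ite_smul]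
      simp
    rw [Finset.sum_congr rfl (fun g' _ => hterm g'), Finset.sum_sub_distrib,
      coset_sum μ hμH g, coset_sum μ hμH 1, sub_eq_zero] at h0
    have h1 : MonoidAlgebra.single g (1:ℚ) * μ = MonoidAlgebra.single (1:G) (1:ℚ) * μ :=
      smul_right_injective _ hcard0 h0
    rw [← MonoidAlgebra.one_def, one_mul] at h1
    exact (hstab g).mp h1
  have htop : H = ⊤ := Subgroup.eq_top_iff' H |>.mpr hall
  subst htop
  have : Nat.card (G ⧸ (⊤ : Subgroup G)) = 1 :=
    Nat.card_eq_one_iff_unique.mpr ⟨QuotientGroup.subsingleton_quotient_top, inferInstance⟩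
  omega

private lemma cycle_surj [Finite G] {p : ℕ} (hp : p.Prime) (hcard : Nat.card (G ⧸ H) = p)
    (g₀ : G) (hord : orderOf g₀ = p) (hnt : ∃ x : G ⧸ H, g₀ • x ≠ x) (x : G ⧸ H) :
    Function.Bijective (fun i : Fin p => g₀ ^ (i : ℕ) • x) := by
  classical
  haveI : Fintype (G ⧸ H) := Fintype.ofFinite _
  have hcards : Fintype.card (G ⧸ H) = p := by rw [← Nat.card_eq_fintype_card, hcard]
  obtain ⟨x₀, hx₀⟩ := hnt
  have haux : ∀ k : ℕ, 0 < k → k < p → g₀ ^ k • x₀ = x₀ → False := by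
    intro k hk0 hkp hfix
    have hfixmul : ∀ m : ℕ, g₀ ^ (k * m) • x₀ = x₀ := by
      intro m
      induction m with
      | zero => simp
      | succ n ih => rw [Nat.mul_succ, pow_add, mul_smul, hfix, ih]
    have hcop : Nat.Coprime k p := (Nat.coprime_of_lt_prime hk0.ne' hkp hp).symm
    obtain ⟨m, -, hm⟩ := Nat.exists_mul_mod_eq_one_of_coprime hcop hp.one_lt
    have : g₀ ^ (k * m) = g₀ := by
      rw [← pow_mod_orderOf, hord, hm, pow_one]
    exact hx₀ (by rw [← this, hfixmul m])
  have hinj : Function.Injective (fun i : Fin p => g₀ ^ (i : ℕ) • x₀) := by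
    have key : ∀ i j : Fin p, (i : ℕ) < (j : ℕ) →
        g₀ ^ (i : ℕ) • x₀ = g₀ ^ (j : ℕ) • x₀ → False := by
      intro i j hij heq
      have hj' : (j : ℕ) = (i : ℕ) + ((j : ℕ) - (i : ℕ)) := by omega
      rw [hj', pow_add, mul_smul] at heq
      have h2 : x₀ = g₀ ^ ((j : ℕ) - (i : ℕ)) • x₀ := smul_left_cancel _ heq
      have hjp := j.isLt
      exact haux _ (by omega) (by omega) h2.symm
    intro i j hij
    simp only at hij
    rcases lt_trichotomy (i : ℕ) (j : ℕ) with h | h | h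
    · exact absurd hij (fun hh => key i j h hh)
    · exact Fin.ext h
    · exact absurd hij.symm (fun hh => key j i h hh)
  have hbij₀ : Function.Bijective (fun i : Fin p => g₀ ^ (i : ℕ) • x₀) :=
    (Fintype.bijective_iff_injective_and_card _).mpr ⟨hinj, by simp [hcards]⟩
  obtain ⟨j, hj⟩ := hbij₀.surjective x
  refine (Fintype.bijective_iff_surjective_and_card _).mpr ⟨?_, by simp [hcards]⟩
  intro y
  obtain ⟨m, hm⟩ := hbij₀.surjective y
  refine ⟨⟨((m : ℕ) + (p - (j : ℕ))) % p, Nat.mod_lt _ hp.pos⟩, ?_⟩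
  simp only [← hj, ← hm, smul_smul, ← pow_add]
  congr 1
  rw [← pow_mod_orderOf, hord, Nat.mod_add_mod]
  have heq : (m : ℕ) + (p - (j : ℕ)) + (j : ℕ) = (m : ℕ) + p := by
    have := j.isLt; omega
  rw [heq, Nat.add_mod_right]
  have := pow_mod_orderOf g₀ (m : ℕ)
  rwa [hord] at this

private lemma ker_aug_le [Finite G] {p : ℕ} (hp : p.Prime) (hcard : Nat.card (G ⧸ H) = p)
    (g₀ : G)
    (hbij : ∀ x : G ⧸ H, Function.Bijective (fun i : Fin p => g₀⁻¹ ^ (i : ℕ) • x))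
    (M : Submodule ℚ ((G ⧸ H) →₀ ℚ)) (hstable : IsGStable H M)
    (u : (G ⧸ H) →₀ ℚ) (huM : u ∈ M) (hu0 : u ≠ 0) (huW : augMap (G ⧸ H) u = 0) :
    LinearMap.ker (augMap (G ⧸ H)) ≤ M := by
  classical
  haveI : Fintype (G ⧸ H) := Fintype.ofFinite _
  haveI : Fact p.Prime := ⟨hp⟩
  have hcards : Fintype.card (G ⧸ H) = p := by rw [← Nat.card_eq_fintype_card, hcard]
  set T : Module.End ℚ ((G ⧸ H) →₀ ℚ) :=
    Finsupp.lmapDomain ℚ ℚ (fun x : G ⧸ H => g₀ • x) with hT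
  have hTform : ∀ (w : (G ⧸ H) →₀ ℚ) (x : G ⧸ H), T w x = w (g₀⁻¹ • x) := by
    intro w x
    have h1 : T w x = Finsupp.mapDomain (fun y : G ⧸ H => g₀ • y) w x := by
      rw [hT, Finsupp.lmapDomain_apply]
    rw [h1]
    conv_lhs => rw [show x = g₀ • (g₀⁻¹ • x) by rw [smul_inv_smul]]
    exact Finsupp.mapDomain_apply (MulAction.injective g₀) w (g₀⁻¹ • x)
  have hTpow : ∀ (i : ℕ) (w : (G ⧸ H) →₀ ℚ) (x : G ⧸ H),
      ((T ^ i) w) x = w (g₀⁻¹ ^ i • x) := by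
    intro i
    induction i with
    | zero => intro w x; simp
    | succ n ih =>
      intro w x
      have h1 : (T ^ (n + 1)) w = (T ^ n) (T w) := by
        rw [pow_succ, Module.End.mul_apply]
      rw [h1, ih (T w) x, hTform, ← mul_smul, ← pow_succ']
  have hTmem : ∀ i : ℕ, (T ^ i) u ∈ M := by
    intro i
    induction i with
    | zero => simpa using huM
    | succ n ih =>
      have h1 : (T ^ (n + 1)) u = T ((T ^ n) u) := by rw [pow_succ', Module.End.mul_apply]
      rw [h1]
      exact hstable g₀ _ ih
  have hTaug : ∀ i : ℕ, augMap (G ⧸ H) ((T ^ i) u) = 0 := by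
    intro i
    induction i with
    | zero => simpa using huW
    | succ n ih =>
      have h1 : (T ^ (n + 1)) u = T ((T ^ n) u) := by rw [pow_succ', Module.End.mul_apply]
      rw [h1, hT, Finsupp.lmapDomain_apply, augMap_mapDomain]
      exact ih
  have hPhi : (aeval T (cyclotomic p ℚ)) u = 0 := by
    rw [cyclotomic_prime ℚ p, map_sum]
    simp only [aeval_X_pow]
    ext x
    rw [LinearMap.sum_apply, Finsupp.coe_zero, Pi.zero_apply]
    have h1 : ∀ i ∈ Finset.range p, ((T ^ i) u) x = u (g₀⁻¹ ^ i • x) :=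
      fun i _ => hTpow i u x
    rw [Finsupp.finset_sum_apply, Finset.sum_congr rfl h1, ← Fin.sum_univ_eq_sum_range]
    have h2 := (hbij x).sum_comp (fun y => u y)
    rw [h2, ← augMap_eq_sum, huW]
  have hli : LinearIndependent ℚ (fun i : Fin (p - 1) => (T ^ (i : ℕ)) u) := by
    rw [Fintype.linearIndependent_iff]
    intro c hc
    by_contra hne
    push_neg at hne
    obtain ⟨i₀, hi₀⟩ := hne
    set f : ℚ[X] := ∑ i : Fin (p - 1), C (c i) * X ^ (i : ℕ) with hf
    have hfu : (aeval T f) u = 0 := by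
      have h1 : (aeval T f) u = ∑ i : Fin (p - 1), c i • ((T ^ (i : ℕ)) u) := by
        rw [hf, map_sum, LinearMap.sum_apply]
        refine Finset.sum_congr rfl fun i _ => ?_
        rw [map_mul, aeval_C, aeval_X_pow, Module.End.mul_apply, Module.algebraMap_end_apply]
      rw [h1, hc]
    have hcoeff : f.coeff (i₀ : ℕ) = c i₀ := by
      rw [hf, Polynomial.finset_sum_coeff]
      simp only [coeff_C_mul, coeff_X_pow, mul_ite, mul_one, mul_zero, Fin.val_inj]
      simp
    have hf0 : f ≠ 0 := fun h => hi₀ (by rw [← hcoeff, h, Polynomial.coeff_zero])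
    have hdvd : ¬ (cyclotomic p ℚ ∣ f) := by
      intro hdvd
      have h1 : (cyclotomic p ℚ).natDegree ≤ f.natDegree :=
        Polynomial.natDegree_le_of_dvd hdvd hf0
      have h2 : f.natDegree ≤ p - 2 := by
        rw [hf]
        refine Polynomial.natDegree_sum_le_of_forall_le _ _ fun i _ => ?_
        refine le_trans (Polynomial.natDegree_C_mul_le _ _) ?_
        rw [Polynomial.natDegree_X_pow]
        have := i.isLt; omega
      rw [Polynomial.natDegree_cyclotomic, Nat.totient_prime hp] at h1
      have := hp.two_le; omega
    have hcop : IsCoprime (cyclotomic p ℚ) f :=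
      (Polynomial.cyclotomic.irreducible_rat hp.pos).coprime_iff_not_dvd.mpr hdvd
    obtain ⟨a, b, hab⟩ := hcop
    have hu : u = 0 := by
      have h1 := congrArg (fun q => (aeval T q) u) hab
      simp only [map_add, map_mul, map_one, LinearMap.add_apply, Module.End.mul_apply,
        Module.End.one_apply] at h1
      rw [hPhi, hfu, map_zero, map_zero, add_zero] at h1
      exact h1.symm
    exact hu0 hu
  set N : Submodule ℚ ((G ⧸ H) →₀ ℚ) :=
    Submodule.span ℚ (Set.range fun i : Fin (p - 1) => (T ^ (i : ℕ)) u) with hN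
  have hNle : N ≤ M ⊓ LinearMap.ker (augMap (G ⧸ H)) := by
    rw [hN, Submodule.span_le]
    rintro _ ⟨i, rfl⟩
    exact ⟨hTmem i, LinearMap.mem_ker.mpr (hTaug i)⟩
  have hfinrankN : Module.finrank ℚ N = p - 1 := by
    rw [hN, finrank_span_eq_card hli, Fintype.card_fin]
  have hfinrankKer : Module.finrank ℚ (LinearMap.ker (augMap (G ⧸ H))) = p - 1 := by
    have hsurj : LinearMap.range (augMap (G ⧸ H)) = ⊤ := by
      rw [LinearMap.range_eq_top]
      intro q
      exact ⟨Finsupp.single (QuotientGroup.mk 1) q, augMap_single _ q⟩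
    have hrn := LinearMap.finrank_range_add_finrank_ker (augMap (G ⧸ H))
    rw [hsurj, finrank_top, Module.finrank_self, Module.finrank_finsupp_self, hcards] at hrn
    omega
  have heq : M ⊓ LinearMap.ker (augMap (G ⧸ H)) = LinearMap.ker (augMap (G ⧸ H)) := by
    apply Submodule.eq_of_le_of_finrank_le inf_le_right
    rw [hfinrankKer]
    calc p - 1 = Module.finrank ℚ N := hfinrankN.symm
      _ ≤ _ := Submodule.finrank_mono hNle
  exact inf_eq_right.mp heq

end Statement3Aux

/-- Let `L` be a finite Galois extension of `ℚ` with Galois group `G`,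
and `H ≤ G` such that `G` acts faithfully on `G/H`. If the cardinality of `G/H` is a
prime number, then the pair `(G,H)` is ℚ-trivial. -/
theorem statement3 (L : Type) [Field L] [Algebra ℚ L] [FiniteDimensional ℚ L] [IsGalois ℚ L]
    (H : Subgroup (L ≃ₐ[ℚ] L))
    (hfaith : ∀ g : L ≃ₐ[ℚ] L, (∀ x : (L ≃ₐ[ℚ] L) ⧸ H, g • x = x) → g = 1)
    (hprime : Nat.Prime (Nat.card ((L ≃ₐ[ℚ] L) ⧸ H))) :
    QTrivialPair H := by
  classical
  haveI : Finite (L ≃ₐ[ℚ] L) := Finite.of_fintype _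
  haveI : Fintype (L ≃ₐ[ℚ] L) := Fintype.ofFinite _
  intro M hstable hadm
  by_cases hconst : ∀ m ∈ M, ∃ a : ℚ, ∀ x, m x = a
  · by_cases hbot : M = ⊥
    · exact Or.inl hbot
    · right
      obtain ⟨m, hmM, hm0⟩ := Submodule.exists_mem_ne_zero_of_ne_bot hbot
      obtain ⟨a, ha⟩ := hconst m hmM
      have ha0 : a ≠ 0 := by
        intro h
        apply hm0
        ext x
        rw [ha x, h]
        rfl
      ext n
      simp only [SetLike.mem_coe, Set.mem_setOf_eq]
      constructor
      · exact fun hn => hconst n hn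
      · rintro ⟨b, hb⟩
        have hn : n = (b / a) • m := by
          ext x
          rw [hb x, Finsupp.smul_apply, ha x, smul_eq_mul, div_mul_cancel₀ _ ha0]
        rw [hn]
        exact M.smul_mem _ hmM
  · exfalso
    push_neg at hconst
    obtain ⟨m, hmM, hmnc⟩ := hconst
    obtain ⟨x, hx⟩ := hmnc (m (QuotientGroup.mk 1))
    obtain ⟨g, rfl⟩ := QuotientGroup.mk_surjective x
    have hgx : g • (QuotientGroup.mk (1 : L ≃ₐ[ℚ] L) : (L ≃ₐ[ℚ] L) ⧸ H)
        = QuotientGroup.mk g := by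
      rw [MulAction.Quotient.smul_mk, smul_eq_mul, mul_one]
    set u : ((L ≃ₐ[ℚ] L) ⧸ H) →₀ ℚ :=
      Finsupp.mapDomain (fun y : (L ≃ₐ[ℚ] L) ⧸ H => g • y) m - m with hu
    have huM : u ∈ M := sub_mem (hstable g m hmM) hmM
    have hu0 : u ≠ 0 := by
      intro h
      have h1 : u (QuotientGroup.mk g) = 0 := by rw [h]; rfl
      rw [hu, Finsupp.sub_apply] at h1
      have h2 : Finsupp.mapDomain (fun y : (L ≃ₐ[ℚ] L) ⧸ H => g • y) m (QuotientGroup.mk g)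
          = m (QuotientGroup.mk 1) := by
        rw [← hgx]
        exact Finsupp.mapDomain_apply (MulAction.injective g) m _
      rw [h2] at h1
      exact hx (by linarith [h1])
    have huW : augMap ((L ≃ₐ[ℚ] L) ⧸ H) u = 0 := by
      rw [hu, map_sub, augMap_mapDomain, sub_self]
    have hdvdG : Nat.card ((L ≃ₐ[ℚ] L) ⧸ H) ∣ Nat.card (L ≃ₐ[ℚ] L) := by
      rw [Subgroup.card_eq_card_quotient_mul_card_subgroup H]
      exact dvd_mul_right _ _
    haveI : Fact (Nat.card ((L ≃ₐ[ℚ] L) ⧸ H)).Prime := ⟨hprime⟩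
    obtain ⟨g₀, hg₀⟩ := exists_prime_orderOf_dvd_card' (Nat.card ((L ≃ₐ[ℚ] L) ⧸ H)) hdvdG
    have hg₀1 : g₀ ≠ 1 := by
      intro h
      rw [h, orderOf_one] at hg₀
      exact hprime.ne_one hg₀.symm
    have hnt : ∃ x : (L ≃ₐ[ℚ] L) ⧸ H, g₀⁻¹ • x ≠ x := by
      by_contra hallx
      push_neg at hallx
      have h1 : g₀⁻¹ = 1 := hfaith _ hallx
      exact hg₀1 (by rwa [inv_eq_one] at h1)
    have hordinv : orderOf g₀⁻¹ = Nat.card ((L ≃ₐ[ℚ] L) ⧸ H) := by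
      rw [orderOf_inv, hg₀]
    have hbij := fun x => cycle_surj hprime rfl g₀⁻¹ hordinv hnt x
    have hker := ker_aug_le hprime rfl g₀ hbij M hstable u huM hu0 huW
    have hdiff : ∀ g' : L ≃ₐ[ℚ] L,
        (Finsupp.single (QuotientGroup.mk g' : (L ≃ₐ[ℚ] L) ⧸ H) (1:ℚ)
          - Finsupp.single (QuotientGroup.mk 1) 1) ∈ (M : Set (((L ≃ₐ[ℚ] L) ⧸ H) →₀ ℚ)) := by
      intro g'
      apply hker
      rw [LinearMap.mem_ker, map_sub, augMap_single, augMap_single, sub_self]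
    exact not_contains_diffs hprime.one_lt _ hadm hdiff


end
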